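/- arXiv:2409.19175 — 2 statements merged into one kernel-verified Lean document; each statement's English description precedes it below -/
import Mathlib

section
/- Fix σ > 0 and s ∈ ℝ. Let ξ : ℝ → ℂ be a characteristic function of a centred distribution with variance σ², so that ξ(t) = 1 - σ²t²/2 + o(t²) as t → 0. Define ψ_N(s) = ξ(s/√N) / (N - 1 - (N-2) ξ(s/√N)). Then lim_{N→∞} ψ_N(s) = 2/(2 + σ²s²). -/
open Filter Asymptotics

theorem stmt_4 (σ : ℝ) (hσ : 0 < σ) (s : ℝ) (ξ : ℝ → ℂ)
    (hξ : (fun t : ℝ => ξ t - (1 - (σ : ℂ) ^ 2 * (t : ℂ) ^ 2 / 2)) =o[nhds 0]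
      fun t : ℝ => t ^ 2) :
    Tendsto
      (fun N : ℕ =>
        ξ (s / Real.sqrt N) /
          ((N : ℂ) - 1 - ((N : ℂ) - 2) * ξ (s / Real.sqrt N)))
      atTop (nhds (2 / (2 + (σ : ℂ) ^ 2 * (s : ℂ) ^ 2))) := by
  have h2R : (0:ℝ) < 2 + σ^2*s^2 := by positivity
  have h2 : (2 + (σ:ℂ)^2*(s:ℂ)^2) ≠ 0 := by
    have : ((2 + σ^2*s^2 : ℝ) : ℂ) ≠ 0 := by exact_mod_cast h2R.ne'
    push_cast at this
    exact this
  by_cases hs0 : s = 0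
  · subst hs0
    have h0 : ξ 0 = 1 := by
      have h := (hξ.def one_pos).self_of_nhds
      simp only [Complex.ofReal_zero, ne_eq, zero_pow, mul_zero, zero_div, sub_zero,
        norm_zero, mul_zero] at h
      norm_num at h
      have h' : ξ 0 - 1 = 0 :=
        norm_eq_zero.mp (le_antisymm (by simpa using h) (norm_nonneg _))
      linear_combination h'
    have : ∀ N : ℕ, ξ ((0:ℝ) / Real.sqrt N) / ((N : ℂ) - 1 - ((N : ℂ) - 2) * ξ ((0:ℝ) / Real.sqrt N)) = 1 := by
      intro N
      simp [h0]
      ring_nf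
    rw [funext this]
    have : (2 : ℂ) / (2 + (σ:ℂ)^2*((0:ℝ):ℂ)^2) = 1 := by
      push_cast; ring_nf
    rw [this]
    exact tendsto_const_nhds
  · have hsqrt : Tendsto (fun N : ℕ => Real.sqrt N) atTop atTop := by
      apply tendsto_atTop_atTop.mpr
      intro b
      refine ⟨⌈b ^ 2⌉₊, fun a ha => ?_⟩
      rcases le_or_gt b 0 with hb | hb
      · exact hb.trans (Real.sqrt_nonneg _)
      · rw [← Real.sqrt_sq hb.le]
        apply Real.sqrt_le_sqrt
        calc b ^ 2 ≤ ⌈b ^ 2⌉₊ := Nat.le_ceil _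
        _ ≤ a := by exact_mod_cast ha
    have hs : Tendsto (fun N : ℕ => s / Real.sqrt N) atTop (nhds 0) :=
      tendsto_const_nhds.div_atTop hsqrt
    have hξ' : (fun t : ℝ => ξ t - (1 - (σ : ℂ) ^ 2 * (t : ℂ) ^ 2 / 2)) =o[nhds 0]
        fun t : ℝ => ((t : ℂ)) ^ 2 := by
      refine hξ.trans_isBigO (isBigO_of_le _ fun t => ?_)
      simp [map_pow, Complex.norm_real, Real.norm_eq_abs, abs_pow, sq_abs]
    have hdiv : Tendsto (fun t : ℝ => (ξ t - (1 - (σ : ℂ) ^ 2 * (t : ℂ) ^ 2 / 2)) / (t : ℂ) ^ 2)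
        (nhds 0) (nhds 0) := hξ'.tendsto_div_nhds_zero
    have hcomp := hdiv.comp hs
    have hkey : ∀ᶠ N : ℕ in atTop,
        (((s / Real.sqrt N : ℝ)) : ℂ) ^ 2 = (s : ℂ) ^ 2 / (N : ℂ) := by
      filter_upwards [eventually_ge_atTop 1] with N hN
      have hN0 : (0 : ℝ) < N := by exact_mod_cast hN
      have hsq : (s / Real.sqrt N) ^ 2 = s ^ 2 / N := by
        rw [div_pow, Real.sq_sqrt hN0.le]
      calc (((s / Real.sqrt N : ℝ)) : ℂ) ^ 2 = ((((s / Real.sqrt N) ^ 2 : ℝ)) : ℂ) := by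
            push_cast; ring
      _ = (s : ℂ) ^ 2 / (N : ℂ) := by rw [hsq]; push_cast; ring
    have hsC : (s : ℂ) ≠ 0 := Complex.ofReal_ne_zero.mpr hs0
    have hNe : Tendsto (fun N : ℕ => (N : ℂ) *
        (ξ (s / Real.sqrt N) - (1 - (σ : ℂ) ^ 2 * (((s / Real.sqrt N : ℝ)) : ℂ) ^ 2 / 2)))
        atTop (nhds 0) := by
      have h := hcomp.mul_const ((s : ℂ) ^ 2)
      rw [zero_mul] at h
      refine h.congr' ?_
      filter_upwards [hkey, eventually_ge_atTop 1] with N hk hN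
      have hN0 : (N : ℂ) ≠ 0 := by
        exact_mod_cast Nat.cast_ne_zero.mpr (Nat.one_le_iff_ne_zero.mp hN)
      simp only [Function.comp_apply, hk]
      field_simp
    have hNone : Tendsto (fun N : ℕ => (N : ℂ) * (1 - ξ (s / Real.sqrt N))) atTop
        (nhds ((σ : ℂ) ^ 2 * (s : ℂ) ^ 2 / 2)) := by
      have h := (tendsto_const_nhds (x := (σ : ℂ) ^ 2 * (s : ℂ) ^ 2 / 2)
        (f := atTop (α := ℕ))).sub hNe
      rw [sub_zero] at h
      refine h.congr' ?_
      filter_upwards [hkey, eventually_ge_atTop 1] with N hk hN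
      have hN0 : (N : ℂ) ≠ 0 := by
        exact_mod_cast Nat.cast_ne_zero.mpr (Nat.one_le_iff_ne_zero.mp hN)
      rw [hk]
      field_simp
      ring
    have h1N : Tendsto (fun N : ℕ => ((N : ℂ))⁻¹) atTop (nhds 0) := by
      have h := (Complex.continuous_ofReal.tendsto (0 : ℝ)).comp
        tendsto_inv_atTop_nhds_zero_nat
      simp only [Complex.ofReal_zero] at h
      refine h.congr fun N => ?_
      simp [Function.comp]
    have hξ1 : Tendsto (fun N : ℕ => ξ (s / Real.sqrt N)) atTop (nhds 1) := by
      have h := (tendsto_const_nhds (x := (1 : ℂ)) (f := atTop (α := ℕ))).sub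
        (h1N.mul hNone)
      rw [zero_mul, sub_zero] at h
      refine h.congr' ?_
      filter_upwards [eventually_ge_atTop 1] with N hN
      have hN0 : (N : ℂ) ≠ 0 := by
        exact_mod_cast Nat.cast_ne_zero.mpr (Nat.one_le_iff_ne_zero.mp hN)
      field_simp
      ring
    have hD : Tendsto (fun N : ℕ => (N : ℂ) - 1 - ((N : ℂ) - 2) * ξ (s / Real.sqrt N)) atTop
        (nhds ((σ : ℂ) ^ 2 * (s : ℂ) ^ 2 / 2 + 1)) := by
      have h := hNone.add ((hξ1.const_mul 2).sub (tendsto_const_nhds (x := (1 : ℂ))))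
      have h2' : (σ : ℂ) ^ 2 * (s : ℂ) ^ 2 / 2 + (2 * 1 - 1) =
          (σ : ℂ) ^ 2 * (s : ℂ) ^ 2 / 2 + 1 := by ring
      rw [h2'] at h
      refine h.congr fun N => by ring
    have hDne : ((σ : ℂ) ^ 2 * (s : ℂ) ^ 2 / 2 + 1) ≠ 0 := by
      intro h; apply h2; linear_combination 2 * h
    have hfin := hξ1.div hD hDne
    have heq : (1 : ℂ) / ((σ : ℂ) ^ 2 * (s : ℂ) ^ 2 / 2 + 1) =
        2 / (2 + (σ : ℂ) ^ 2 * (s : ℂ) ^ 2) := by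
      rw [div_eq_div_iff hDne h2]; ring
    rw [← heq]
    exact hfin
end

section
/- Let μ_n be a sequence of probability measures on ℝ satisfying the recursion μ_{n+1} = α (μ_n * λ) + β λ + γ μ_n, where λ is a fixed probability measure on ℝ, α, β, γ ≥ 0, α + β + γ = 1, β > 0. Then μ_n converges weakly to a probability measure μ satisfying μ = α (μ * λ) + β λ + γ μ, and this μ is unique. -/
open MeasureTheory Filter
open scoped ENNReal

lemma stmt8_smul_prod (c : ℝ≥0∞) (μ ν : Measure ℝ) [SFinite ν] :
    (c • μ).prod ν = c • (μ.prod ν) := by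
  ext s hs
  simp [Measure.prod_apply hs, lintegral_smul_measure]

lemma stmt8_conv_smul_left (c : ℝ≥0∞) (μ ν : Measure ℝ) [SFinite ν] :
    (c • μ).conv ν = c • (μ.conv ν) := by
  unfold Measure.conv
  rw [stmt8_smul_prod, Measure.map_smul]

lemma stmt8_conv_sum_left (m : ℕ → Measure ℝ) (ν : Measure ℝ) [SFinite ν] :
    (Measure.sum m).conv ν = Measure.sum (fun i => (m i).conv ν) := by
  unfold Measure.conv
  rw [Measure.prod_sum_left,
    Measure.map_sum (by fun_prop : AEMeasurable (fun p : ℝ × ℝ => p.1 + p.2) _)]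

lemma stmt8_conv_univ (μ ν : Measure ℝ) [SFinite ν] :
    (μ.conv ν) Set.univ = μ Set.univ * ν Set.univ := by
  unfold Measure.conv
  rw [Measure.map_apply (by fun_prop) MeasurableSet.univ]
  simp [← Set.univ_prod_univ]

noncomputable def stmt8Lop (lam : Measure ℝ) (α γ : ℝ) (ν : Measure ℝ) : Measure ℝ :=
  ENNReal.ofReal α • ν.conv lam + ENNReal.ofReal γ • ν

lemma stmt8Lop_add (lam : Measure ℝ) [SFinite lam] (α γ : ℝ) (ν₁ ν₂ : Measure ℝ)
    [SFinite ν₁] [SFinite ν₂] :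
    stmt8Lop lam α γ (ν₁ + ν₂) = stmt8Lop lam α γ ν₁ + stmt8Lop lam α γ ν₂ := by
  unfold stmt8Lop
  rw [Measure.add_conv, smul_add, smul_add]
  abel

lemma stmt8Lop_smul (lam : Measure ℝ) [SFinite lam] (α γ : ℝ) (c : ℝ≥0∞) (ν : Measure ℝ) :
    stmt8Lop lam α γ (c • ν) = c • stmt8Lop lam α γ ν := by
  unfold stmt8Lop
  rw [stmt8_conv_smul_left, smul_add, smul_comm c (ENNReal.ofReal α),
    smul_comm c (ENNReal.ofReal γ)]

lemma stmt8Lop_sum (lam : Measure ℝ) [SFinite lam] (α γ : ℝ) (m : ℕ → Measure ℝ) :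
    stmt8Lop lam α γ (Measure.sum m) = Measure.sum (fun i => stmt8Lop lam α γ (m i)) := by
  unfold stmt8Lop
  rw [stmt8_conv_sum_left]
  ext s hs
  simp only [Measure.coe_add, Pi.add_apply, Measure.smul_apply, smul_eq_mul,
    Measure.sum_apply _ hs, ENNReal.tsum_add, ENNReal.tsum_mul_left]

lemma stmt8Lop_univ (lam : Measure ℝ) [IsProbabilityMeasure lam] {α γ : ℝ}
    (hα : 0 ≤ α) (hγ : 0 ≤ γ) (ν : Measure ℝ) [SFinite ν] :
    stmt8Lop lam α γ ν Set.univ = ENNReal.ofReal (α + γ) * ν Set.univ := by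
  unfold stmt8Lop
  simp only [Measure.coe_add, Pi.add_apply, Measure.smul_apply, smul_eq_mul, stmt8_conv_univ,
    measure_univ, mul_one, ENNReal.ofReal_add hα hγ]
  ring

lemma stmt8Lop_finite (lam : Measure ℝ) [IsProbabilityMeasure lam] (α γ : ℝ)
    (ν : Measure ℝ) [IsFiniteMeasure ν] : IsFiniteMeasure (stmt8Lop lam α γ ν) := by
  constructor
  unfold stmt8Lop
  simp only [Measure.coe_add, Pi.add_apply, Measure.smul_apply, smul_eq_mul]
  exact ENNReal.add_lt_top.mpr ⟨ENNReal.mul_lt_top ENNReal.ofReal_lt_top (measure_lt_top _ _),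
    ENNReal.mul_lt_top ENNReal.ofReal_lt_top (measure_lt_top _ _)⟩

lemma stmt8_smul_finite (c : ℝ) (ν : Measure ℝ) [IsFiniteMeasure ν] :
    IsFiniteMeasure (ENNReal.ofReal c • ν) := by
  constructor
  simp only [Measure.smul_apply, smul_eq_mul]
  exact ENNReal.mul_lt_top ENNReal.ofReal_lt_top (measure_lt_top _ _)

lemma stmt8_iterate_finite (lam : Measure ℝ) [IsProbabilityMeasure lam] (α γ : ℝ)
    (ν : Measure ℝ) [hν : IsFiniteMeasure ν] (n : ℕ) :
    IsFiniteMeasure ((stmt8Lop lam α γ)^[n] ν) := by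
  induction n with
  | zero => simpa
  | succ n ih =>
    rw [Function.iterate_succ_apply']
    exact @stmt8Lop_finite lam _ α γ _ ih

lemma stmt8_iterate_univ (lam : Measure ℝ) [IsProbabilityMeasure lam] {α γ : ℝ}
    (hα : 0 ≤ α) (hγ : 0 ≤ γ) (ν : Measure ℝ) [hν : IsFiniteMeasure ν] (n : ℕ) :
    ((stmt8Lop lam α γ)^[n] ν) Set.univ = ENNReal.ofReal (α + γ) ^ n * ν Set.univ := by
  induction n with
  | zero => simp
  | succ n ih =>
    haveI := stmt8_iterate_finite lam α γ ν n
    rw [Function.iterate_succ_apply', stmt8Lop_univ lam hα hγ, ih, pow_succ]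
    ring

lemma stmt8_finsetSum_finite (m : ℕ → Measure ℝ) (hm : ∀ k, IsFiniteMeasure (m k)) (n : ℕ) :
    IsFiniteMeasure (∑ k ∈ Finset.range n, m k) := by
  induction n with
  | zero => simp only [Finset.range_zero, Finset.sum_empty]; infer_instance
  | succ n ih =>
    rw [Finset.sum_range_succ]
    haveI := hm n
    infer_instance

lemma stmt8Lop_finsetSum (lam : Measure ℝ) [IsProbabilityMeasure lam] (α γ : ℝ)
    (m : ℕ → Measure ℝ) (hm : ∀ k, IsFiniteMeasure (m k)) (n : ℕ) :
    stmt8Lop lam α γ (∑ k ∈ Finset.range n, m k)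
      = ∑ k ∈ Finset.range n, stmt8Lop lam α γ (m k) := by
  induction n with
  | zero =>
    simp only [Finset.range_zero, Finset.sum_empty]
    unfold stmt8Lop
    simp
  | succ n ih =>
    haveI := stmt8_finsetSum_finite m hm n
    haveI := hm n
    rw [Finset.sum_range_succ, stmt8Lop_add, ih, Finset.sum_range_succ]

lemma stmt8_term_finite (lam : Measure ℝ) [IsProbabilityMeasure lam] (α β γ : ℝ) (k : ℕ) :
    IsFiniteMeasure (ENNReal.ofReal β • (stmt8Lop lam α γ)^[k] lam) := by
  haveI := stmt8_iterate_finite lam α γ lam k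
  exact stmt8_smul_finite β _

lemma stmt8_key_formula (lam : Measure ℝ) [IsProbabilityMeasure lam] (α β γ : ℝ)
    (μ : ℕ → Measure ℝ) (hfin : ∀ n, IsFiniteMeasure (μ n))
    (hrec : ∀ n, μ (n + 1) = stmt8Lop lam α γ (μ n) + ENNReal.ofReal β • lam) (n : ℕ) :
    μ n = (stmt8Lop lam α γ)^[n] (μ 0)
      + ∑ k ∈ Finset.range n, ENNReal.ofReal β • (stmt8Lop lam α γ)^[k] lam := by
  induction n with
  | zero => simp
  | succ n ih =>
    haveI := hfin 0
    haveI := stmt8_finsetSum_finite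
      (fun k => ENNReal.ofReal β • (stmt8Lop lam α γ)^[k] lam)
      (stmt8_term_finite lam α β γ) n
    haveI : IsFiniteMeasure ((stmt8Lop lam α γ)^[n] (μ 0)) :=
      stmt8_iterate_finite lam α γ (μ 0) n
    haveI : SFinite ((stmt8Lop lam α γ)^[n] (μ 0)) := inferInstance
    haveI : SFinite (∑ k ∈ Finset.range n, ENNReal.ofReal β • (stmt8Lop lam α γ)^[k] lam) :=
      inferInstance
    rw [hrec n, ih, stmt8Lop_add lam α γ ((stmt8Lop lam α γ)^[n] (μ 0))
        (∑ k ∈ Finset.range n, ENNReal.ofReal β • (stmt8Lop lam α γ)^[k] lam),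
      stmt8Lop_finsetSum lam α γ _ (stmt8_term_finite lam α β γ) n,
      ← Function.iterate_succ_apply' (stmt8Lop lam α γ) n (μ 0)]
    have hshift : ∀ k, stmt8Lop lam α γ (ENNReal.ofReal β • (stmt8Lop lam α γ)^[k] lam)
        = ENNReal.ofReal β • (stmt8Lop lam α γ)^[k + 1] lam := by
      intro k
      rw [stmt8Lop_smul, Function.iterate_succ_apply']
    rw [Finset.sum_congr rfl (fun k _ => hshift k), Finset.sum_range_succ']
    simp only [Function.iterate_zero_apply]
    abel

theorem stmt_8 (lam : Measure ℝ) [IsProbabilityMeasure lam]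
    (α β γ : ℝ) (hα : 0 ≤ α) (hβ : 0 < β) (hγ : 0 ≤ γ) (hsum : α + β + γ = 1)
    (μ : ℕ → Measure ℝ) (hprob : ∀ n, IsProbabilityMeasure (μ n))
    (hrec : ∀ n, μ (n + 1) =
      ENNReal.ofReal α • ((μ n).conv lam) + ENNReal.ofReal β • lam
        + ENNReal.ofReal γ • μ n) :
    ∃ μlim : Measure ℝ, IsProbabilityMeasure μlim
      ∧ μlim = ENNReal.ofReal α • (μlim.conv lam) + ENNReal.ofReal β • lam
          + ENNReal.ofReal γ • μlim
      ∧ (∀ f : BoundedContinuousFunction ℝ ℝ,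
          Tendsto (fun n => ∫ x, f x ∂(μ n)) atTop (nhds (∫ x, f x ∂μlim)))
      ∧ (∀ ν : Measure ℝ, IsProbabilityMeasure ν →
          ν = ENNReal.ofReal α • (ν.conv lam) + ENNReal.ofReal β • lam
            + ENNReal.ofReal γ • ν → ν = μlim) := by
  set L := stmt8Lop lam α γ with hL
  set r := ENNReal.ofReal (α + γ) with hr
  have hαγ0 : 0 ≤ α + γ := by linarith
  have hαγ1 : α + γ < 1 := by linarith
  have hr1 : r < 1 := ENNReal.ofReal_lt_one.mpr hαγ1
  set ρ : ℕ → Measure ℝ := fun k => L^[k] lam with hρ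
  have ρuniv : ∀ k, ρ k Set.univ = r ^ k := by
    intro k
    rw [hρ, hL, stmt8_iterate_univ lam hα hγ lam k, measure_univ, mul_one, hr]
  set μlim : Measure ℝ := Measure.sum (fun k => ENNReal.ofReal β • ρ k) with hμlim
  have hβne0 : ENNReal.ofReal β ≠ 0 := by
    simp [ENNReal.ofReal_eq_zero, not_le, hβ]
  have h1r : 1 - r = ENNReal.ofReal β := by
    have hb : (1 : ℝ) - (α + γ) = β := by linarith
    rw [hr, ← ENNReal.ofReal_one, ← ENNReal.ofReal_sub 1 hαγ0, hb]
  have hμlim_univ : μlim Set.univ = 1 := by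
    rw [hμlim, Measure.sum_apply _ MeasurableSet.univ]
    simp only [Measure.smul_apply, smul_eq_mul, ρuniv]
    rw [ENNReal.tsum_mul_left, ENNReal.tsum_geometric, h1r,
      ENNReal.mul_inv_cancel hβne0 ENNReal.ofReal_ne_top]
  haveI hμlimprob : IsProbabilityMeasure μlim := ⟨hμlim_univ⟩
  -- sum shift
  have hsum_shift : ∀ (m : ℕ → Measure ℝ),
      Measure.sum m = m 0 + Measure.sum (fun k => m (k + 1)) := by
    intro m
    ext s hs
    simp only [Measure.sum_apply _ hs, Measure.coe_add, Pi.add_apply]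
    exact tsum_eq_zero_add' ENNReal.summable
  -- fixed point
  have hLμlim : L μlim = Measure.sum (fun k => ENNReal.ofReal β • ρ (k + 1)) := by
    rw [hμlim, hL, stmt8Lop_sum]
    congr 1
    funext k
    rw [stmt8Lop_smul, hρ]
    simp only
    rw [← hL, ← Function.iterate_succ_apply' L k lam]
  have hfix : μlim = ENNReal.ofReal α • (μlim.conv lam) + ENNReal.ofReal β • lam
      + ENNReal.ofReal γ • μlim := by
    have h2 : μlim = ENNReal.ofReal β • ρ 0 + Measure.sum
        (fun k => ENNReal.ofReal β • ρ (k + 1)) := hsum_shift _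
    have h3 : μlim = ENNReal.ofReal β • lam + L μlim := by
      rw [hLμlim]
      calc μlim = ENNReal.ofReal β • ρ 0 + Measure.sum
            (fun k => ENNReal.ofReal β • ρ (k + 1)) := h2
        _ = ENNReal.ofReal β • lam + Measure.sum
            (fun k => ENNReal.ofReal β • ρ (k + 1)) := by
            rw [hρ]; simp
    calc μlim = ENNReal.ofReal β • lam + L μlim := h3
      _ = ENNReal.ofReal α • (μlim.conv lam) + ENNReal.ofReal β • lam
          + ENNReal.ofReal γ • μlim := by
          rw [hL]; unfold stmt8Lop; abel
  -- key formula for μ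
  have hfinμ : ∀ n, IsFiniteMeasure (μ n) := fun n => by
    haveI := hprob n; infer_instance
  have hrec' : ∀ n, μ (n + 1) = L (μ n) + ENNReal.ofReal β • lam := by
    intro n
    rw [hrec n, hL]
    unfold stmt8Lop
    abel
  have hkey := stmt8_key_formula lam α β γ μ hfinμ hrec'
  refine ⟨μlim, hμlimprob, hfix, ?_, ?_⟩
  · -- weak convergence
    intro f
    have hInt : ∀ (ν : Measure ℝ), IsFiniteMeasure ν → Integrable f ν := by
      intro ν hν
      haveI := hν
      exact f.integrable ν
    have hμlimfin : IsFiniteMeasure μlim :=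
      ⟨by rw [hμlim_univ]; exact ENNReal.one_lt_top⟩
    have hSum : HasSum (fun k => ∫ x, f x ∂(ENNReal.ofReal β • ρ k)) (∫ x, f x ∂μlim) := by
      rw [hμlim]
      exact hasSum_integral_measure (hInt _ (hμlim ▸ hμlimfin))
    have hIfin : ∀ n, IsFiniteMeasure (L^[n] (μ 0)) := fun n => by
      haveI := hfinμ 0
      exact stmt8_iterate_finite lam α γ (μ 0) n
    have hE : Tendsto (fun n => ∫ x, f x ∂(L^[n] (μ 0))) atTop (nhds 0) := by
      apply squeeze_zero_norm (a := fun n => ‖f‖ * (α + γ) ^ n)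
      · intro n
        haveI := hIfin n
        have hb : ‖∫ x, f x ∂(L^[n] (μ 0))‖
            ≤ ‖f‖ * ((L^[n] (μ 0)) Set.univ).toReal :=
          norm_integral_le_of_norm_le_const (μ := L^[n] (μ 0))
            (Filter.Eventually.of_forall (fun x => f.norm_coe_le_norm x))
        refine hb.trans (le_of_eq ?_)
        haveI := hfinμ 0
        rw [hL, stmt8_iterate_univ lam hα hγ (μ 0) n, measure_univ, mul_one,
          ← ENNReal.ofReal_pow hαγ0, ENNReal.toReal_ofReal (pow_nonneg hαγ0 n)]
      · simpa using (tendsto_pow_atTop_nhds_zero_of_lt_one hαγ0 hαγ1).const_mul ‖f‖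
    have heq : ∀ n, ∫ x, f x ∂(μ n) = ∫ x, f x ∂(L^[n] (μ 0))
        + ∑ k ∈ Finset.range n, ∫ x, f x ∂(ENNReal.ofReal β • ρ k) := by
      intro n
      rw [hkey n, integral_add_measure (hInt _ (hIfin n))
        (hInt _ (stmt8_finsetSum_finite (fun k => ENNReal.ofReal β • ρ k)
          (stmt8_term_finite lam α β γ) n)),
        integral_finset_sum_measure (fun k _ => hInt _ (stmt8_term_finite lam α β γ k))]
    have := hE.add hSum.tendsto_sum_nat
    rw [zero_add] at this
    exact this.congr (fun n => (heq n).symm)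
  · -- uniqueness
    intro ν hνprob hνfix
    have hνrec : ∀ n : ℕ, (fun _ : ℕ => ν) (n + 1)
        = L ((fun _ : ℕ => ν) n) + ENNReal.ofReal β • lam := by
      intro n
      simp only
      calc ν = ENNReal.ofReal α • (ν.conv lam) + ENNReal.ofReal β • lam
          + ENNReal.ofReal γ • ν := hνfix
        _ = L ν + ENNReal.ofReal β • lam := by rw [hL]; unfold stmt8Lop; abel
    have hνkey := stmt8_key_formula lam α β γ (fun _ => ν)
      (fun _ => by haveI := hνprob; infer_instance) hνrec
    ext s hs
    have h1 : Tendsto (fun n => (L^[n] ν) s) atTop (nhds 0) := by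
      refine tendsto_of_tendsto_of_tendsto_of_le_of_le (g := fun _ => 0)
        (h := fun n => r ^ n) tendsto_const_nhds
        (ENNReal.tendsto_pow_atTop_nhds_zero_of_lt_one hr1)
        (fun n => zero_le) ?_
      intro n
      haveI : IsFiniteMeasure ν := by haveI := hνprob; infer_instance
      calc (L^[n] ν) s ≤ (L^[n] ν) Set.univ := measure_mono (Set.subset_univ s)
        _ = r ^ n := by
          rw [hL, stmt8_iterate_univ lam hα hγ ν n, measure_univ, mul_one, hr]
    have h2 : Tendsto (fun n => ∑ k ∈ Finset.range n, (ENNReal.ofReal β • ρ k) s)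
        atTop (nhds (μlim s)) := by
      have := ENNReal.tendsto_nat_tsum (fun k => (ENNReal.ofReal β • ρ k) s)
      rwa [← Measure.sum_apply _ hs, ← hμlim] at this
    have h3 := Tendsto.add (f := fun n => (L^[n] ν) s) h1 h2
    rw [zero_add] at h3
    have h4 : Tendsto (fun _ : ℕ => ν s) atTop (nhds (μlim s)) := by
      refine h3.congr (fun n => ?_)
      have := congrArg (fun m : Measure ℝ => m s) (hνkey n)
      simp only [Measure.coe_add, Pi.add_apply, Measure.coe_finset_sum,
        Finset.sum_apply] at this
      exact this.symm
    exact tendsto_nhds_unique h4 tendsto_const_nhds ▸ rfl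
end
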